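/- For every n ≥ 3, a 2-dimensional Q-subspace V of C contains a 'rational n-tuple' if and only if V contains n points p_1,...,p_n that are the vertices of a simple (non-self-intersecting) n-gon all of whose angles are rational multiples of π and no two of whose sides are parallel. -/

import Mathlib

open Complex

/-! ### Auxiliary lemmas -/

/-- The "angle unit" of a complex number. -/
noncomputable def raq (z : ℂ) : ℂ := z / (starRingEnd ℂ) z

lemma conj_ne_zero' {z : ℂ} (hz : z ≠ 0) : (starRingEnd ℂ) z ≠ 0 := by
  simpa using hz

lemma raq_ne_zero {z : ℂ} (hz : z ≠ 0) : raq z ≠ 0 :=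
  div_ne_zero hz (conj_ne_zero' hz)

lemma raq_div {v w : ℂ} (hv : v ≠ 0) (hw : w ≠ 0) : raq (v / w) = raq v / raq w := by
  unfold raq
  rw [map_div₀]
  field_simp

lemma rat_smul_eq_real_smul (q : ℚ) (z : ℂ) : q • z = (q : ℝ) • z := by
  rw [Rat.smul_def, Complex.real_smul, Complex.ofReal_ratCast]

lemma raq_rat_smul {z : ℂ} (q : ℚ) (hq : q ≠ 0) : raq (q • z) = raq z := by
  unfold raq
  rw [Rat.smul_def, map_mul]
  have : (starRingEnd ℂ) (q : ℂ) = (q : ℂ) := by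
    simp [Complex.conj_eq_iff_im]
  rw [this, mul_div_mul_left]
  exact_mod_cast hq

lemma pair_li_ne_zero' {v w : ℂ} (h : LinearIndependent ℝ ![v, w]) : v ≠ 0 ∧ w ≠ 0 := by
  rw [LinearIndependent.pair_iff] at h
  constructor
  · rintro rfl; have := (h 1 0 (by simp)).1; norm_num at this
  · rintro rfl; have := (h 0 1 (by simp)).2; norm_num at this

lemma pair_li_smul {v w : ℂ} (h : LinearIndependent ℝ ![v, w]) {a b : ℝ} (ha : a ≠ 0)
    (hb : b ≠ 0) : LinearIndependent ℝ ![a • v, b • w] := by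
  rw [LinearIndependent.pair_iff] at h ⊢
  intro s t hst
  have := h (s * a) (t * b) (by rw [mul_smul, mul_smul]; exact hst)
  exact ⟨by rcases this with ⟨h1, -⟩; exact (mul_eq_zero.1 h1).resolve_right ha,
    by rcases this with ⟨-, h2⟩; exact (mul_eq_zero.1 h2).resolve_right hb⟩

lemma pair_li_rat {x y : ℂ} (h : LinearIndependent ℝ ![x, y]) {s t : ℚ}
    (hst : s • x + t • y = 0) : s = 0 ∧ t = 0 := by
  have := LinearIndependent.pair_iff.1 h (s : ℝ) (t : ℝ) (by
    rw [← rat_smul_eq_real_smul, ← rat_smul_eq_real_smul]; exact hst)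
  exact ⟨by exact_mod_cast this.1, by exact_mod_cast this.2⟩

/-! ### The cross product -/

noncomputable def crossL (z : ℂ) : ℂ →ₗ[ℝ] ℝ where
  toFun w := ((starRingEnd ℂ) z * w).im
  map_add' a b := by simp [mul_add]
  map_smul' c a := by
    simp only [Complex.real_smul, RingHom.id_apply, smul_eq_mul]
    rw [mul_comm (c:ℂ) a, ← mul_assoc]
    simp [Complex.mul_im]
    ring

lemma crossL_self (z : ℂ) : crossL z z = 0 := by
  simp [crossL, Complex.mul_im]
  ring

lemma crossL_ne_zero_of_li {z w : ℂ} (h : LinearIndependent ℝ ![z, w]) : crossL z w ≠ 0 := by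
  intro h0
  have hz := (pair_li_ne_zero' h).1
  have key : (starRingEnd ℂ) z * w = (((starRingEnd ℂ) z * w).re : ℂ) := by
    apply Complex.ext <;> simp [crossL] at h0 ⊢
    exact h0
  have heq : (((starRingEnd ℂ) z * w).re : ℝ) • z + (-(Complex.normSq z : ℝ)) • w = 0 := by
    have h2 : ((Complex.normSq z : ℂ)) * w = z * ((starRingEnd ℂ) z * w) := by
      rw [Complex.normSq_eq_conj_mul_self]; ring
    rw [key] at h2
    simp only [Complex.real_smul]
    rw [Complex.ofReal_neg, neg_mul, h2]
    ring
  have h3 := (LinearIndependent.pair_iff.1 h _ _ heq).2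
  rw [neg_eq_zero] at h3
  exact hz (Complex.normSq_eq_zero.1 h3)

lemma crossL_eq_sin (z w : ℂ) :
    crossL z w = ‖z‖ * ‖w‖ * Real.sin (arg w - arg z) := by
  show ((starRingEnd ℂ) z * w).im = _
  conv_lhs => rw [← norm_mul_exp_arg_mul_I z, ← norm_mul_exp_arg_mul_I w]
  rw [map_mul, ← Complex.exp_conj]
  simp only [map_mul, Complex.conj_ofReal, Complex.conj_I, mul_neg]
  rw [mul_mul_mul_comm, ← Complex.exp_add]
  have : -(↑(arg z) * I) + ↑(arg w) * I = ((arg w - arg z : ℝ) : ℂ) * I := by push_cast; ring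
  rw [this, Complex.exp_mul_I]
  simp only [Complex.mul_im, Complex.mul_re, Complex.add_im, Complex.add_re,
    Complex.cos_ofReal_im, Complex.sin_ofReal_re, Complex.cos_ofReal_re, Complex.sin_ofReal_im,
    Complex.ofReal_im, Complex.ofReal_re, Complex.I_re, Complex.I_im]
  ring

lemma arg_ne_of_li {x y : ℂ} (h : LinearIndependent ℝ ![x, y]) : arg x ≠ arg y := by
  intro he
  apply crossL_ne_zero_of_li h
  rw [crossL_eq_sin, he, sub_self, Real.sin_zero, mul_zero]

/-! ### Sums -/

lemma partial_sum_pos {N : ℕ} (c : ℕ → ℝ) (hne : ∀ j < N, c j ≠ 0)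
    (hmono : ∀ j j', j ≤ j' → j' < N → c j < 0 → c j' < 0)
    (hsum : ∑ j ∈ Finset.range N, c j = 0) :
    ∀ m, 0 < m → m < N → 0 < ∑ j ∈ Finset.range m, c j := by
  intro m hm hmN
  by_cases hall : ∀ j < m, 0 < c j
  · have : ∀ j ∈ Finset.range m, 0 < c j := fun j hj => hall j (Finset.mem_range.1 hj)
    exact Finset.sum_pos this ⟨0, Finset.mem_range.2 hm⟩
  · push_neg at hall
    obtain ⟨j₁, hj₁m, hj₁⟩ := hall
    have hj₁neg : c j₁ < 0 :=
      lt_of_le_of_ne hj₁ (hne j₁ (lt_trans hj₁m hmN))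
    have hneg : ∀ j, m ≤ j → j < N → c j < 0 := fun j hmj hjN =>
      hmono j₁ j (le_trans (le_of_lt hj₁m) hmj) hjN hj₁neg
    have hsplit : ∑ j ∈ Finset.range m, c j + ∑ j ∈ Finset.Ico m N, c j = 0 := by
      rw [Finset.sum_range_add_sum_Ico _ (le_of_lt hmN)]; exact hsum
    have : ∑ j ∈ Finset.Ico m N, c j < 0 := by
      apply Finset.sum_neg
      · intro j hj
        rw [Finset.mem_Ico] at hj
        exact hneg j hj.1 hj.2
      · exact ⟨m, Finset.mem_Ico.2 ⟨le_refl m, hmN⟩⟩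
    linarith

lemma window_sum_zero {n : ℕ} (u : ℕ → ℂ) (hsum : ∑ a ∈ Finset.range n, u a = 0)
    (hper : ∀ a, u (a + n) = u a) :
    ∀ c, ∑ a ∈ Finset.Ico c (c + n), u a = 0 := by
  intro c
  induction c with
  | zero => simpa using hsum
  | succ c ih =>
    rcases Nat.eq_zero_or_pos n with rfl | hn
    · simp
    have h1 : ∑ a ∈ Finset.Ico (c+1) (c+1+n), u a
        = ∑ a ∈ Finset.Ico (c+1) (c+n), u a + u (c+n) := by
      have : c + 1 + n = (c + n) + 1 := by omega
      rw [this, Finset.sum_Ico_succ_top (by omega)]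
    have h2 : ∑ a ∈ Finset.Ico c (c+n), u a
        = u c + ∑ a ∈ Finset.Ico (c+1) (c+n), u a := by
      rw [← Finset.sum_eq_sum_Ico_succ_bot (by omega)]
    rw [h2] at ih
    rw [h1, hper c]
    linear_combination ih

lemma u_mod {n : ℕ} (hn : 0 < n) (u : ℕ → ℂ) (hper : ∀ a, u (a + n) = u a) :
    ∀ a, u a = u (a % n) := by
  intro a
  induction a using Nat.strong_induction_on with
  | _ a ih =>
    by_cases h : a < n
    · rw [Nat.mod_eq_of_lt h]
    · push_neg at h
      have : a = (a - n) + n := by omega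
      rw [this, hper, ih (a - n) (by omega), Nat.add_mod_right]

/-! ### Chains of rational angles -/

open Fin.NatCast in
lemma ra_chain {m : ℕ} (v : Fin (m+1) → ℂ) (hnz : ∀ i, v i ≠ 0)
    (h : ∀ i, ∃ k : ℕ, 0 < k ∧ (raq (v i) / raq (v (i+1))) ^ k = 1) :
    ∀ i j : Fin (m+1), ∃ k : ℕ, 0 < k ∧ (raq (v i) / raq (v j)) ^ k = 1 := by
  choose k hk hk1 using h
  set K : ℕ := ∏ i : Fin (m+1), k i with hK
  have hKpos : 0 < K := Finset.prod_pos fun i _ => hk i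
  have hKone : ∀ i, (raq (v i) / raq (v (i+1))) ^ K = 1 := by
    intro i
    obtain ⟨c, hc⟩ := Finset.dvd_prod_of_mem k (Finset.mem_univ i)
    rw [← hK] at hc
    rw [hc, pow_mul, hk1 i, one_pow]
  have main : ∀ t : ℕ, ∀ i : Fin (m+1), (raq (v i) / raq (v (i + (t : Fin (m+1))))) ^ K = 1 := by
    intro t
    induction t with
    | zero => intro i; simp [div_self (raq_ne_zero (hnz i))]
    | succ t ih =>
      intro i
      have step : raq (v i) / raq (v (i + ((t:ℕ)+1 : ℕ))) =
          (raq (v i) / raq (v (i + (t : Fin (m+1))))) *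
            (raq (v (i + (t : Fin (m+1)))) / raq (v (i + (t : Fin (m+1)) + 1))) := by
        rw [div_mul_div_cancel₀]
        · congr 2
          push_cast
          simp only [Nat.cast_add, Nat.cast_one, add_assoc]
        · exact raq_ne_zero (hnz _)
      rw [step, mul_pow, ih i, hKone (i + (t : Fin (m+1))), one_mul]
  intro i j
  refine ⟨K, hKpos, ?_⟩
  have := main ((j - i : Fin (m+1)) : ℕ) i
  rwa [Fin.cast_val_eq_self, add_sub_cancel] at this

/-! ### The supporting-line inequality -/

open Real in
lemma supporting_core {n : ℕ} (hn : 3 ≤ n) (u : ℕ → ℂ)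
    (hper : ∀ a, u (a + n) = u a)
    (hsum : ∑ a ∈ Finset.range n, u a = 0)
    (hli : ∀ a b, a < n → b < n → a ≠ b → LinearIndependent ℝ ![u a, u b])
    (hargmono : ∀ a b, a < b → b < n → arg (u a) < arg (u b)) :
    ∀ K j, K < n → 1 ≤ j → j ≤ n - 2 →
      0 < ∑ r ∈ Finset.range j, crossL (u K) (u (K + 1 + r)) := by
  have hn0 : 0 < n := by omega
  set Θ : ℕ → ℝ := fun a => arg (u (a % n)) + 2 * π * (a / n : ℕ) with hΘ
  have hΘmono : StrictMono Θ := by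
    apply strictMono_nat_of_lt_succ
    intro a
    by_cases h : a % n + 1 < n
    · have e1 : (a + 1) % n = a % n + 1 := by
        rw [Nat.add_mod]
        rw [Nat.mod_eq_of_lt (show 1 < n by omega), Nat.mod_eq_of_lt h]
      have e2 : (a + 1) / n = a / n := by
        apply Nat.succ_div_of_not_dvd
        intro hd
        have h0 : (a + 1) % n = 0 := Nat.mod_eq_zero_of_dvd hd
        omega
      simp only [hΘ, e1, e2]
      have := hargmono (a % n) (a % n + 1) (by omega) h
      linarith
    · have ha : a % n = n - 1 := by have := Nat.mod_lt a hn0; omega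
      have e1 : (a + 1) % n = 0 := by
        rw [Nat.add_mod, ha, Nat.mod_eq_of_lt (show 1 < n by omega)]
        simp [show n - 1 + 1 = n by omega]
      have e2 : (a + 1) / n = a / n + 1 := by
        apply Nat.succ_div_of_dvd
        exact Nat.dvd_of_mod_eq_zero e1
      simp only [hΘ, e1, e2, ha]
      have h1 : arg (u (n - 1)) ≤ π := Complex.arg_le_pi _
      have h2 : -π < arg (u 0) := Complex.neg_pi_lt_arg _
      have hπ := Real.pi_pos
      push_cast
      nlinarith
  have hΘper : ∀ a, Θ (a + n) = Θ a + 2 * π := by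
    intro a
    simp only [hΘ, Nat.add_mod_right, Nat.add_div_right _ hn0]
    push_cast
    ring
  intro K j hK hj1 hj2
  set c : ℕ → ℝ := fun r => crossL (u K) (u (K + 1 + r)) with hc
  have hbne : ∀ r, r < n - 1 → (K + 1 + r) % n ≠ K := by
    intro r hr hEq
    have hdm := Nat.div_add_mod (K + 1 + r) n
    set q := (K + 1 + r) / n with hq
    rw [hEq] at hdm
    have hq2 : q < 2 := by
      by_contra hq2
      push_neg at hq2
      have : 2 * n ≤ n * q := by
        calc 2 * n = n * 2 := by ring
        _ ≤ n * q := Nat.mul_le_mul_left n hq2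
      omega
    interval_cases q <;> omega
  have hli' : ∀ r, r < n - 1 → LinearIndependent ℝ ![u K, u (K + 1 + r)] := by
    intro r hr
    rw [u_mod hn0 u hper (K + 1 + r)]
    exact hli K _ hK (Nat.mod_lt _ hn0) (Ne.symm (hbne r hr))
  have hne : ∀ r, r < n - 1 → c r ≠ 0 := fun r hr => crossL_ne_zero_of_li (hli' r hr)
  have hcsin : ∀ r, c r = ‖u K‖ * ‖u (K + 1 + r)‖ *
      Real.sin (Θ (K + 1 + r) - Θ K) := by
    intro r
    rw [hc]
    simp only
    rw [crossL_eq_sin]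
    congr 1
    have eK : Θ K = arg (u K) := by
      simp only [hΘ, Nat.mod_eq_of_lt hK, Nat.div_eq_of_lt hK]
      push_cast
      ring
    have eb : Θ (K + 1 + r) = arg (u (K + 1 + r)) + ((K + 1 + r) / n : ℕ) * (2 * π) := by
      simp only [hΘ]
      rw [← u_mod hn0 u hper (K + 1 + r)]
      push_cast
      ring
    rw [eK, eb]
    rw [show arg (u (K+1+r)) + ((K + 1 + r) / n : ℕ) * (2*π) - arg (u K)
        = (arg (u (K+1+r)) - arg (u K)) + ((K + 1 + r) / n : ℕ) * (2*π) by ring]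
    rw [Real.sin_add_nat_mul_two_pi]
  have habs : ∀ r, r < n - 1 → 0 < ‖u K‖ * ‖u (K + 1 + r)‖ := by
    intro r hr
    have h1 := (pair_li_ne_zero' (hli' r hr)).1
    have h2 := (pair_li_ne_zero' (hli' r hr)).2
    exact mul_pos (norm_pos_iff.mpr h1) (norm_pos_iff.mpr h2)
  have hd : ∀ r, r < n - 1 → 0 < Θ (K + 1 + r) - Θ K ∧ Θ (K + 1 + r) - Θ K < 2 * π := by
    intro r hr
    constructor
    · have := hΘmono (show K < K + 1 + r by omega); linarith
    · have h1 := hΘmono (show K + 1 + r < K + n by omega)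
      have h2 := hΘper K
      linarith
  have hmono : ∀ r r', r ≤ r' → r' < n - 1 → c r < 0 → c r' < 0 := by
    intro r r' hrr' hr' hcr
    have hr : r < n - 1 := lt_of_le_of_lt hrr' hr'
    have hsinr : Real.sin (Θ (K + 1 + r) - Θ K) < 0 := by
      rcases lt_trichotomy (Real.sin (Θ (K + 1 + r) - Θ K)) 0 with h | h | h
      · exact h
      · exfalso; rw [hcsin r, h, mul_zero] at hcr; exact lt_irrefl _ hcr
      · exfalso; rw [hcsin r] at hcr; nlinarith [habs r hr]
    have hdr := hd r hr
    have hdgt : π < Θ (K + 1 + r) - Θ K := by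
      by_contra hle
      push_neg at hle
      exact absurd (Real.sin_nonneg_of_nonneg_of_le_pi (le_of_lt hdr.1) hle)
        (not_le.2 hsinr)
    have hdr' := hd r' hr'
    have hmono2 : Θ (K + 1 + r) ≤ Θ (K + 1 + r') := hΘmono.le_iff_le.2 (by omega)
    have hsinr' : Real.sin (Θ (K + 1 + r') - Θ K) ≤ 0 := by
      have h0 := Real.sin_nonneg_of_nonneg_of_le_pi
        (show (0:ℝ) ≤ Θ (K + 1 + r') - Θ K - π by linarith)
        (show Θ (K + 1 + r') - Θ K - π ≤ π by linarith [hdr'.2, Real.pi_pos])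
      rw [Real.sin_sub_pi] at h0
      linarith
    have : Real.sin (Θ (K + 1 + r') - Θ K) < 0 := by
      rcases lt_or_eq_of_le hsinr' with h | h
      · exact h
      · exfalso
        apply hne r' hr'
        rw [hcsin r', h, mul_zero]
    rw [hcsin r']
    exact mul_neg_of_pos_of_neg (habs r' hr') this
  have hsum' : ∑ r ∈ Finset.range (n - 1), c r = 0 := by
    have hmap : ∑ r ∈ Finset.range (n - 1), c r
        = crossL (u K) (∑ r ∈ Finset.range (n - 1), u (K + 1 + r)) := by
      rw [map_sum]
    have hS : ∑ r ∈ Finset.range (n - 1), u (K + 1 + r) = -u K := by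
      have e1 : ∑ r ∈ Finset.range (n - 1), u (K + 1 + r)
          = ∑ a ∈ Finset.Ico (K + 1) (K + n), u a := by
        rw [Finset.sum_Ico_eq_sum_range, show K + n - (K + 1) = n - 1 by omega]
      have e2 : ∑ a ∈ Finset.Ico K (K + n), u a = 0 := window_sum_zero u hsum hper K
      have e3 : ∑ a ∈ Finset.Ico K (K + n), u a
          = u K + ∑ a ∈ Finset.Ico (K + 1) (K + n), u a := by
        rw [← Finset.sum_eq_sum_Ico_succ_bot (by omega)]
      rw [e1]
      rw [e3] at e2
      linear_combination e2
    rw [hmap, hS, map_neg, crossL_self, neg_zero]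
  exact partial_sum_pos c hne hmono hsum' j hj1 (lt_of_le_of_lt hj2 (by omega))

/-! ### A relation with all coefficients nonzero -/

lemma exists_nonzero_relation {m : ℕ} (a b : ℂ) (v : Fin (m+3) → ℂ)
    (hmem : ∀ i, v i ∈ Submodule.span ℚ ({a, b} : Set ℂ))
    (hli : ∀ i j, i ≠ j → LinearIndependent ℝ ![v i, v j]) :
    ∃ q : Fin (m+3) → ℚ, (∀ i, q i ≠ 0) ∧ ∑ i, q i • v i = 0 := by
  have hcoord : ∀ i, ∃ α β : ℚ, α • a + β • b = v i := fun i =>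
    (Submodule.mem_span_pair).1 (hmem i)
  choose α β hαβ using hcoord
  set T : (Fin (m+3) → ℚ) →ₗ[ℚ] ℂ :=
    { toFun := fun q => ∑ i, q i • v i
      map_add' := by intros x y; simp [add_smul, Finset.sum_add_distrib]
      map_smul' := by intros c x; simp [mul_smul, Finset.smul_sum] } with hT
  have hTsingle : ∀ mm : Fin (m+3), T (Pi.single mm (1 : ℚ)) = v mm := by
    intro mm
    simp only [hT, LinearMap.coe_mk, AddHom.coe_mk]
    rw [Finset.sum_eq_single mm]
    · simp
    · intro i _ hi; rw [Pi.single_eq_of_ne hi]; simp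
    · intro h; exact absurd (Finset.mem_univ mm) h
  have step1 : ∀ k : Fin (m+3), ∃ q : Fin (m+3) → ℚ, T q = 0 ∧ q k ≠ 0 := by
    intro k
    set i := k + 1 with hi
    set j := k + 2 with hj
    have hik : i ≠ k := fun h => by
      rw [hi, add_eq_left] at h; simp [Fin.ext_iff] at h
    have hjk : j ≠ k := fun h => by
      rw [hj, add_eq_left] at h; simp [Fin.ext_iff, Nat.mod_eq_of_lt (show 2 < m + 3 by omega)] at h
    have hij : i ≠ j := fun h => by
      rw [hi, hj] at h
      have := add_left_cancel h
      simp [Fin.ext_iff, Nat.mod_eq_of_lt (show 2 < m + 3 by omega)] at this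
    have hliij := hli i j hij
    have hDne : α i * β j - α j * β i ≠ 0 := by
      intro hD0
      have h1 : (β j) • v i + (- β i) • v j = 0 := by
        rw [← hαβ i, ← hαβ j]
        have : β j • (α i • a + β i • b) + (-β i) • (α j • a + β j • b)
            = (β j * α i - β i * α j) • a := by
          simp only [smul_add, smul_smul, neg_smul, neg_mul]
          module
        rw [this, show β j * α i - β i * α j = 0 by linarith, zero_smul]
      have h2 : (- α j) • v i + (α i) • v j = 0 := by
        rw [← hαβ i, ← hαβ j]
        have : (-α j) • (α i • a + β i • b) + (α i) • (α j • a + β j • b)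
            = (α i * β j - α j * β i) • b := by
          simp only [smul_add, smul_smul, neg_smul, neg_mul]
          module
        rw [this, hD0, zero_smul]
      obtain ⟨hβj, hβi⟩ := pair_li_rat hliij h1
      obtain ⟨hαj, hαi⟩ := pair_li_rat hliij h2
      have : v i = 0 := by
        rw [← hαβ i, hαi, neg_eq_zero.1 hβi, zero_smul, zero_smul, add_zero]
      exact (pair_li_ne_zero' hliij).1 this
    set s : ℚ := (α k * β j - β k * α j) / (α i * β j - α j * β i) with hs
    set t : ℚ := (α i * β k - β i * α k) / (α i * β j - α j * β i) with ht
    refine ⟨s • (Pi.single i 1 : Fin (m+3) → ℚ) + t • (Pi.single j 1 : Fin (m+3) → ℚ)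
      - (Pi.single k 1 : Fin (m+3) → ℚ), ?_, ?_⟩
    · rw [map_sub, map_add, map_smul, map_smul, hTsingle, hTsingle, hTsingle]
      rw [← hαβ i, ← hαβ j, ← hαβ k]
      have e1 : s * α i + t * α j = α k := by
          rw [hs, ht, div_mul_eq_mul_div, div_mul_eq_mul_div, ← add_div, div_eq_iff hDne]; ring
      have e2 : s * β i + t * β j = β k := by
          rw [hs, ht, div_mul_eq_mul_div, div_mul_eq_mul_div, ← add_div, div_eq_iff hDne]; ring
      calc s • (α i • a + β i • b) + t • (α j • a + β j • b) - (α k • a + β k • b)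
          = (s * α i + t * α j - α k) • a + (s * β i + t * β j - β k) • b := by
            simp only [smul_add, smul_smul, sub_smul, add_smul]; module
        _ = 0 := by rw [e1, e2]; simp
    · simp [Pi.single_eq_of_ne (Ne.symm hik).symm, Pi.single_eq_of_ne, hik, hjk]
  have step2 : ∀ S : Finset (Fin (m+3)), ∃ q : Fin (m+3) → ℚ, T q = 0 ∧ ∀ i ∈ S, q i ≠ 0 := by
    intro S
    induction S using Finset.induction_on with
    | empty => exact ⟨0, map_zero T, by simp⟩
    | @insert k S' hk ih =>
      obtain ⟨w, hw0, hwS⟩ := ih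
      obtain ⟨u, hu0, huk⟩ := step1 k
      set F : Finset ℚ := insert 0 ((insert k S').image fun i => -(w i) / (u i)) with hF
      obtain ⟨c, hc⟩ := Infinite.exists_notMem_finset F
      have hc0 : c ≠ 0 := fun h => hc (by rw [h, hF]; exact Finset.mem_insert_self _ _)
      refine ⟨w + c • u, ?_, ?_⟩
      · rw [map_add, map_smul, hw0, hu0, smul_zero, add_zero]
      · intro i hiS hzero
        simp only [Pi.add_apply, Pi.smul_apply, smul_eq_mul] at hzero
        by_cases hui : u i = 0
        · rw [hui, mul_zero, add_zero] at hzero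
          rcases Finset.mem_insert.1 hiS with rfl | hiS'
          · exact huk hui
          · exact hwS i hiS' hzero
        · apply hc
          rw [hF]
          apply Finset.mem_insert_of_mem
          apply Finset.mem_image.2
          exact ⟨i, hiS, by field_simp; linarith [hzero]⟩
  obtain ⟨q, hq0, hq⟩ := step2 Finset.univ
  exact ⟨q, fun i => hq i (Finset.mem_univ i), hq0⟩

/-- Two `ℝ`-linearly independent complex numbers `v, w` form a rational angle: the argument of
`v/w` is a rational multiple of `π`, i.e. `(v/w)/conj(v/w)` is a root of unity. -/
def RationalAngle (v w : ℂ) : Prop :=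
  LinearIndependent ℝ ![v, w] ∧
    ∃ k : ℕ, 0 < k ∧ ((v / w) / (starRingEnd ℂ) (v / w)) ^ k = 1

lemma ra_to_raq {v w : ℂ} (h : RationalAngle v w) :
    ∃ k : ℕ, 0 < k ∧ (raq v / raq w) ^ k = 1 := by
  obtain ⟨hli, k, hk, h1⟩ := h
  refine ⟨k, hk, ?_⟩
  rwa [show v / w / (starRingEnd ℂ) (v / w) = raq (v / w) from rfl,
    raq_div (pair_li_ne_zero' hli).1 (pair_li_ne_zero' hli).2] at h1

lemma raq_to_ra {v w : ℂ} (hli : LinearIndependent ℝ ![v, w])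
    (h : ∃ k : ℕ, 0 < k ∧ (raq v / raq w) ^ k = 1) : RationalAngle v w := by
  obtain ⟨k, hk, h1⟩ := h
  refine ⟨hli, k, hk, ?_⟩
  rwa [show v / w / (starRingEnd ℂ) (v / w) = raq (v / w) from rfl,
    raq_div (pair_li_ne_zero' hli).1 (pair_li_ne_zero' hli).2]

lemma rationalAngle_smul {x y : ℂ} (h : RationalAngle x y) {qx qy : ℚ} (hqx : qx ≠ 0)
    (hqy : qy ≠ 0) : RationalAngle (qx • x) (qy • y) := by
  have hli := h.1
  refine raq_to_ra ?_ ?_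
  · rw [rat_smul_eq_real_smul, rat_smul_eq_real_smul]
    exact pair_li_smul hli (by exact_mod_cast hqx) (by exact_mod_cast hqy)
  · obtain ⟨k, hk, h1⟩ := ra_to_raq h
    exact ⟨k, hk, by rw [raq_rat_smul _ hqx, raq_rat_smul _ hqy]; exact h1⟩

/-- For `n ≥ 3`, a space `V` (the `ℚ`-span in `ℂ` of two `ℝ`-linearly independent
complex numbers) contains a rational `n`-tuple if and only if it contains the vertices
`p₁, …, pₙ` of a simple (non-self-intersecting) `n`-gon all of whose angles are rational
multiples of `π` and no two of whose sides are parallel.  Indices are taken cyclically in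
`Fin n` via the cyclic successor `finRotate n`; the side leaving `p i` is
`p (finRotate n i) - p i`. -/
theorem rational_tuple_iff_rational_polygon (n : ℕ) (hn : 3 ≤ n) (V : Submodule ℚ ℂ)
    (hV : ∃ a b : ℂ, LinearIndependent ℝ ![a, b] ∧ V = Submodule.span ℚ ({a, b} : Set ℂ)) :
    (∃ v : Fin n → ℂ, (∀ i, v i ∈ V) ∧
        ∀ i j, i ≠ j → RationalAngle (v i) (v j)) ↔
    (∃ p : Fin n → ℂ, (∀ i, p i ∈ V) ∧
        -- the polygon is simple: two sides meet exactly in a shared endpoint, if adjacent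
        (∀ i j : Fin n, i ≠ j →
          segment ℝ (p i) (p (finRotate n i)) ∩ segment ℝ (p j) (p (finRotate n j)) =
            if j = finRotate n i then {p (finRotate n i)}
            else if i = finRotate n j then {p i} else ∅) ∧
        -- all angles of the polygon are rational multiples of π
        (∀ i : Fin n, RationalAngle (p (finRotate n i) - p i)
          (p (finRotate n (finRotate n i)) - p (finRotate n i))) ∧
        -- no two sides are parallel
        (∀ i j : Fin n, i ≠ j →
          LinearIndependent ℝ ![p (finRotate n i) - p i, p (finRotate n j) - p j])) := by
  obtain ⟨m, rfl⟩ : ∃ m, n = m + 3 := ⟨n - 3, by omega⟩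
  clear hn
  obtain ⟨a, b, hab, rfl⟩ := hV
  have hrot : ∀ i : Fin (m+3), finRotate (m+3) i = i + 1 := finRotate_succ_apply
  constructor
  · -- Forward direction: tuple → polygon
    rintro ⟨v, hvV, hang⟩
    have hliv : ∀ i j, i ≠ j → LinearIndependent ℝ ![v i, v j] := fun i j hij => (hang i j hij).1
    obtain ⟨q, hq0, hqsum⟩ := exists_nonzero_relation a b v hvV hliv
    have hne1 : ∀ i : Fin (m+3), i ≠ i + 1 := by
      intro i h
      rw [left_eq_add] at h
      simp [Fin.ext_iff] at h
    have hvne : ∀ i, v i ≠ 0 := fun i => (pair_li_ne_zero' (hliv i (i+1) (hne1 i))).1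
    set s : Fin (m+3) → ℂ := fun i => q i • v i with hs
    have hsli : ∀ i j, i ≠ j → LinearIndependent ℝ ![s i, s j] := by
      intro i j hij
      show LinearIndependent ℝ ![q i • v i, q j • v j]
      rw [rat_smul_eq_real_smul, rat_smul_eq_real_smul]
      exact pair_li_smul (hliv i j hij) (by exact_mod_cast hq0 i) (by exact_mod_cast hq0 j)
    have hssum : ∑ i, s i = 0 := hqsum
    set g : Fin (m+3) → ℝ := fun i => arg (s i) with hg
    set σ : Equiv.Perm (Fin (m+3)) := Tuple.sort g with hσ
    have hginj : Function.Injective g := by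
      intro i j hij
      by_contra hne
      exact arg_ne_of_li (hsli i j hne) hij
    have hmono : StrictMono (g ∘ σ) :=
      (Tuple.monotone_sort g).strictMono_of_injective (hginj.comp σ.injective)
    set w : Fin (m+3) → ℂ := fun i => s (σ i) with hw
    have hwsum : ∑ i, w i = 0 := (Equiv.sum_comp σ s).trans hssum
    have hwli : ∀ i j, i ≠ j → LinearIndependent ℝ ![w i, w j] :=
      fun i j hij => hsli _ _ (fun h => hij (σ.injective h))
    have hwarg : ∀ i j : Fin (m+3), i < j → arg (w i) < arg (w j) := fun i j hij => hmono hij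
    set u : ℕ → ℂ := fun x => w ⟨x % (m+3), Nat.mod_lt _ (by omega)⟩ with hu
    have hper : ∀ x, u (x + (m+3)) = u x := by
      intro x
      show w _ = w _
      congr 1
      simp [Fin.ext_iff, Nat.add_mod_right]
    have hufin : ∀ i : Fin (m+3), u i.val = w i := by
      intro i
      show w _ = w i
      congr 1
      exact Fin.ext (by simp [Nat.mod_eq_of_lt i.isLt])
    have husum : ∑ x ∈ Finset.range (m+3), u x = 0 := by
      rw [← Fin.sum_univ_eq_sum_range u (m+3)]
      rw [show ∑ i : Fin (m+3), u i.val = ∑ i : Fin (m+3), w i from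
        Finset.sum_congr rfl fun i _ => hufin i]
      exact hwsum
    have huli : ∀ x y, x < m+3 → y < m+3 → x ≠ y → LinearIndependent ℝ ![u x, u y] := by
      intro x y hx hy hxy
      have := hwli ⟨x, hx⟩ ⟨y, hy⟩ (by simp [Fin.ext_iff]; exact hxy)
      rwa [← hufin ⟨x, hx⟩, ← hufin ⟨y, hy⟩] at this
    have huarg : ∀ x y, x < y → y < m+3 → arg (u x) < arg (u y) := by
      intro x y hxy hy
      have hx : x < m+3 := lt_trans hxy hy
      have := hwarg ⟨x, hx⟩ ⟨y, hy⟩ (by simp [Fin.lt_def]; exact hxy)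
      rwa [← hufin ⟨x, hx⟩, ← hufin ⟨y, hy⟩] at this
    have hsupp := supporting_core (show 3 ≤ m+3 by omega) u hper husum huli huarg
    set P : ℕ → ℂ := fun x => ∑ t ∈ Finset.range x, u t with hP
    have hPper : ∀ x, P (x + (m+3)) = P x := by
      intro x
      induction x with
      | zero =>
        show ∑ t ∈ Finset.range (0 + (m+3)), u t = ∑ t ∈ Finset.range 0, u t
        rw [zero_add, husum, Finset.range_zero, Finset.sum_empty]
      | succ x ih =>
        show ∑ t ∈ Finset.range (x + 1 + (m+3)), u t = ∑ t ∈ Finset.range (x+1), u t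
        rw [show x + 1 + (m+3) = (x + (m+3)) + 1 by omega, Finset.sum_range_succ,
          Finset.sum_range_succ, hper x]
        exact congrArg (· + u x) ih
    have hPmod : ∀ x, P x = P (x % (m+3)) := u_mod (by omega) P hPper
    set p : Fin (m+3) → ℂ := fun i => P i.val with hp
    have hval1 : ∀ i : Fin (m+3), ((i + 1 : Fin (m+3))).val = (i.val + 1) % (m+3) := by
      intro i
      rw [Fin.add_def, Fin.val_one]
    have hkey : ∀ i : Fin (m+3), p (i+1) = P (i.val + 1) := by
      intro i
      show P ((i+1 : Fin (m+3)).val) = P (i.val + 1)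
      rw [hval1 i, ← hPmod]
    have hside : ∀ i : Fin (m+3), p (i+1) - p i = w i := by
      intro i
      rw [hkey i]
      show (∑ t ∈ Finset.range (i.val + 1), u t) - ∑ t ∈ Finset.range i.val, u t = w i
      rw [Finset.sum_range_succ, add_sub_cancel_left, hufin i]
    have hsupport : ∀ k mm : Fin (m+3), mm ≠ k → mm ≠ k + 1 →
        0 < crossL (w k) (p mm - p (k+1)) := by
      intro k mm h1 h2
      have hkval : k.val < m+3 := k.isLt
      have hmval : mm.val < m+3 := mm.isLt
      have hm1 : mm.val ≠ k.val := fun h => h1 (Fin.ext h)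
      have hm2 : mm.val ≠ (k.val + 1) % (m+3) := fun h => h2 (Fin.ext (by rw [hval1 k]; exact h))
      set f := mm.val + (m+3) - (k.val + 1) with hf
      set j := f % (m+3) with hj
      have hjlt : j < m+3 := Nat.mod_lt _ (by omega)
      have hjf : j = f ∨ j + (m+3) = f := by
        rcases Nat.lt_or_ge f (m+3) with h | h
        · left; rw [hj, Nat.mod_eq_of_lt h]
        · right
          rw [hj, Nat.mod_eq_sub_mod h, Nat.mod_eq_of_lt (by omega)]
          omega
      have hj1 : 1 ≤ j := by
        rcases Nat.lt_or_ge (k.val + 1) (m+3) with hlt | hge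
        · rw [Nat.mod_eq_of_lt hlt] at hm2
          rcases hjf with h | h <;> omega
        · have hkv : k.val + 1 = m + 3 := by omega
          rw [hkv, Nat.mod_self] at hm2
          rcases hjf with h | h <;> omega
      have hj2 : j ≤ m + 1 := by
        rcases hjf with h | h <;> omega
      have hcong : (k.val + 1 + j) % (m+3) = mm.val := by
        rcases hjf with h | h
        · have he : k.val + 1 + j = mm.val + (m+3) := by omega
          rw [he, Nat.add_mod_right, Nat.mod_eq_of_lt hmval]
        · have he : k.val + 1 + j = mm.val := by omega
          rw [he, Nat.mod_eq_of_lt hmval]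
      have hpm : p mm = P (k.val + 1 + j) := by
        show P mm.val = _
        rw [hPmod (k.val + 1 + j), hcong]
      have hdiff : p mm - p (k+1) = ∑ r ∈ Finset.range j, u (k.val + 1 + r) := by
        rw [hpm, hkey k]
        show (∑ t ∈ Finset.range (k.val + 1 + j), u t) - ∑ t ∈ Finset.range (k.val+1), u t = _
        rw [Finset.sum_range_add, add_sub_cancel_left]
      rw [hdiff, map_sum]
      have := hsupp k.val j k.isLt hj1 (by omega)
      rwa [hufin k] at this
    -- helper geometric facts
    have hzero : ∀ (k : Fin (m+3)) x, x ∈ segment ℝ (p k) (p (k+1)) →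
        crossL (w k) (x - p (k+1)) = 0 := by
      rintro k x ⟨ua, ub, hua, hub, hab1, rfl⟩
      have hub' : ub = 1 - ua := by linarith
      subst hub'
      have he : ua • p k + (1 - ua) • p (k+1) - p (k+1) = ua • (p k - p (k+1)) := by module
      rw [he, map_smul, smul_eq_mul]
      have h2 : p k - p (k+1) = -(w k) := by rw [← hside k]; ring
      rw [h2, map_neg, crossL_self, neg_zero, mul_zero]
    have hCpos : ∀ k : Fin (m+3), 0 < crossL (w k) (p ((k+1)+1) - p (k+1)) := by
      intro k
      apply hsupport k ((k+1)+1)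
      · intro h
        rw [add_assoc, add_eq_left] at h
        simp only [Fin.ext_iff, Fin.add_def, Fin.val_one, Fin.val_zero] at h
        rw [Nat.mod_eq_of_lt (show 2 < m+3 by omega)] at h
        omega
      · intro h
        rw [add_eq_left] at h
        simp [Fin.ext_iff] at h
    have hadj : ∀ (k : Fin (m+3)) x, x ∈ segment ℝ (p (k+1)) (p ((k+1)+1)) → x ≠ p (k+1) →
        0 < crossL (w k) (x - p (k+1)) := by
      rintro k x ⟨va, vb, hva, hvb, hab1, rfl⟩ hne
      have hva' : va = 1 - vb := by linarith
      subst hva'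
      have he : (1 - vb) • p (k+1) + vb • p ((k+1)+1) - p (k+1)
          = vb • (p ((k+1)+1) - p (k+1)) := by module
      rw [he, map_smul, smul_eq_mul]
      have hvb0 : vb ≠ 0 := by
        intro h0
        apply hne
        rw [h0]
        simp
      exact mul_pos (lt_of_le_of_ne hvb (Ne.symm hvb0)) (hCpos k)
    have hfar : ∀ (k l : Fin (m+3)) x, x ∈ segment ℝ (p l) (p (l+1)) →
        l ≠ k → l ≠ k+1 → l+1 ≠ k → l+1 ≠ k+1 →
        0 < crossL (w k) (x - p (k+1)) := by
      rintro k l x ⟨ua, ub, hua, hub, hab1, rfl⟩ h1 h2 h3 h4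
      have hub' : ub = 1 - ua := by linarith
      subst hub'
      have he : ua • p l + (1 - ua) • p (l+1) - p (k+1)
          = ua • (p l - p (k+1)) + (1 - ua) • (p (l+1) - p (k+1)) := by module
      rw [he, map_add, map_smul, map_smul, smul_eq_mul, smul_eq_mul]
      have c1 := hsupport k l h1 h2
      have c2 := hsupport k (l+1) h3 h4
      rcases eq_or_lt_of_le hua with h0 | h0
      · rw [← h0]
        simpa using c2
      · have hp1 := mul_pos h0 c1
        have hp2 := mul_nonneg hub c2.le
        linarith
    simp only [hrot]
    refine ⟨p, ?_, ?_, ?_, ?_⟩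
    · intro i
      show (∑ t ∈ Finset.range i.val, u t) ∈ _
      refine Submodule.sum_mem _ fun t _ => ?_
      show q _ • v _ ∈ _
      exact Submodule.smul_mem _ _ (hvV _)
    · intro i j' hij
      by_cases hji : j' = i + 1
      · rw [if_pos hji]
        subst hji
        ext x
        simp only [Set.mem_inter_iff, Set.mem_singleton_iff]
        constructor
        · rintro ⟨hx1, hx2⟩
          by_contra hxne
          have h0 := hzero i x hx1
          have hgt := hadj i x hx2 hxne
          linarith
        · rintro rfl
          exact ⟨right_mem_segment ℝ _ _, left_mem_segment ℝ _ _⟩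
      · rw [if_neg hji]
        by_cases hij1 : i = j' + 1
        · rw [if_pos hij1]
          ext x
          simp only [Set.mem_inter_iff, Set.mem_singleton_iff]
          constructor
          · rintro ⟨hx1, hx2⟩
            by_contra hxne
            rw [hij1] at hx1 hxne
            have h0 := hzero j' x hx2
            have hgt := hadj j' x hx1 hxne
            linarith
          · rintro rfl
            constructor
            · exact left_mem_segment ℝ _ _
            · rw [hij1]
              exact right_mem_segment ℝ _ _
        · rw [if_neg hij1]
          rw [Set.eq_empty_iff_forall_notMem]
          rintro x ⟨hx1, hx2⟩
          have h0 := hzero j' x hx2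
          have hgt := hfar j' i x hx1 hij hij1 (fun h => hji h.symm)
            (fun h => hij (add_right_cancel h))
          linarith
    · intro i
      rw [hside i, hside (i+1)]
      show RationalAngle (q (σ i) • v (σ i)) (q (σ (i+1)) • v (σ (i+1)))
      exact rationalAngle_smul (hang (σ i) (σ (i+1))
        (fun h => hne1 i (σ.injective h))) (hq0 _) (hq0 _)
    · intro i j' hij
      rw [hside i, hside j']
      exact hwli i j' hij
  · -- Backward direction: polygon → tuple
    rintro ⟨p, hpV, _hsimple, hang, hli⟩
    simp only [hrot] at hang hli
    set v : Fin (m+3) → ℂ := fun i => p (i+1) - p i with hv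
    have hvV' : ∀ i, v i ∈ Submodule.span ℚ ({a, b} : Set ℂ) :=
      fun i => sub_mem (hpV _) (hpV _)
    have hvne : ∀ i, v i ≠ 0 := fun i => (pair_li_ne_zero' (hang i).1).1
    have hchain : ∀ i : Fin (m+3), ∃ k : ℕ, 0 < k ∧ (raq (v i) / raq (v (i+1))) ^ k = 1 :=
      fun i => ra_to_raq (hang i)
    have hall := ra_chain v hvne hchain
    exact ⟨v, hvV', fun i j hij => raq_to_ra (hli i j hij) (hall i j)⟩
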